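/- Suppose C ⊆ X is a forward T-invariant and T-complete Borel set, and μ is a T-conservative Borel measure. Then C is μ-conull. -/

import Mathlib

open MeasureTheory

/-- `W` is `T`-wandering: it meets each forward orbit in at most one point. -/
def IsWandering {X : Type*} (T : X → X) (W : Set X) : Prop :=
  ∀ x : X, (W ∩ Set.range fun k : ℕ => T^[k] x).Subsingleton

def IsConservative {X : Type*} [MeasurableSpace X] (T : X → X)
    (μ : Measure X) : Prop :=
  ∀ W : Set X, MeasurableSet W → IsWandering T W → μ W = 0

theorem conull_of_invariant_complete {X : Type*} [MeasurableSpace X]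
    (T : X → X) (hT : Measurable T) (μ : Measure X)
    (hcons : IsConservative T μ)
    (C : Set X) (hC : MeasurableSet C) (hinv : T '' C ⊆ C)
    (hcomp : ∀ x : X, ∃ n : ℕ, T^[n] x ∈ C) :
    μ Cᶜ = 0 := by
  -- monotonicity of membership along orbits
  have mono : ∀ (x : X) (n m : ℕ), n ≤ m → T^[n] x ∈ C → T^[m] x ∈ C := by
    intro x n m hnm h
    induction m with
    | zero => simpa [Nat.le_zero.mp hnm] using h
    | succ m ih =>
      rcases Nat.lt_or_ge n (m+1) with hlt | hge
      · have : T^[m] x ∈ C := ih (Nat.lt_succ_iff.mp hlt)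
        have := hinv ⟨T^[m] x, this, rfl⟩
        simpa [Function.iterate_succ_apply'] using this
      · have : n = m + 1 := le_antisymm hnm hge
        simpa [this] using h
  set W : ℕ → Set X := fun n => (T^[n+1]) ⁻¹' C \ (T^[n]) ⁻¹' C with hW
  have hWmeas : ∀ n, MeasurableSet (W n) := fun n =>
    ((hT.iterate (n+1)) hC).diff ((hT.iterate n) hC)
  have hWwand : ∀ n, IsWandering T (W n) := by
    intro n x a ha b hb
    obtain ⟨⟨haC, haC'⟩, j, rfl⟩ := ha
    obtain ⟨⟨hbC, hbC'⟩, k, rfl⟩ := hb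
    -- show j = k
    rcases lt_trichotomy j k with h | h | h
    · exfalso
      apply hbC'
      have : T^[n+1] (T^[j] x) ∈ C := haC
      have h2 : T^[n+1+j] x ∈ C := by
        rwa [← Function.iterate_add_apply] at this
      have : T^[n+k] x ∈ C := mono x (n+1+j) (n+k) (by omega) h2
      show T^[n] (T^[k] x) ∈ C
      rwa [← Function.iterate_add_apply]
    · rw [h]
    · exfalso
      apply haC'
      have : T^[n+1] (T^[k] x) ∈ C := hbC
      have h2 : T^[n+1+k] x ∈ C := by
        rwa [← Function.iterate_add_apply] at this
      have : T^[n+j] x ∈ C := mono x (n+1+k) (n+j) (by omega) h2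
      show T^[n] (T^[j] x) ∈ C
      rwa [← Function.iterate_add_apply]
  have hcover : Cᶜ ⊆ ⋃ n, W n := by
    intro x hx
    obtain ⟨n, hn⟩ := hcomp x
    have hn0 : n ≠ 0 := by
      rintro rfl
      exact hx hn
    -- take minimal n
    haveI := Classical.decPred (fun k => T^[k] x ∈ C)
    have hex : ∃ k, T^[k] x ∈ C := ⟨n, hn⟩
    set m := Nat.find hex with hmdef
    have hm : T^[m] x ∈ C := Nat.find_spec hex
    have hmin : ∀ k < m, T^[k] x ∉ C := fun k hk => Nat.find_min hex hk
    have hm0 : m ≠ 0 := by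
      intro h
      exact hx (by rw [h] at hm; exact hm)
    refine Set.mem_iUnion.mpr ⟨m - 1, ?_, ?_⟩
    · show T^[m-1+1] x ∈ C
      have : m - 1 + 1 = m := by omega
      rwa [this]
    · exact hmin (m-1) (by omega)
  refine le_antisymm ?_ (zero_le)
  calc μ Cᶜ ≤ μ (⋃ n, W n) := measure_mono hcover
    _ ≤ ∑' n, μ (W n) := measure_iUnion_le _
    _ = 0 := by simp [fun n => hcons (W n) (hWmeas n) (hWwand n)]
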